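/- Let A be a three-dimensional permutation array of size 2 × k × 2k with k odd, defined by a bijection φ : [2]×[k] → [2k], and suppose A has dots α_1, ω_1, α_2, ω_2 with ω_1 - α_1 and ω_2 - α_2 both equal as toroidal vectors to (0, y, k) for some y ∈ ℤ_k \ {0}, with third coordinates satisfying ω_1[3] - α_1[3] = k, ω_2[3] - α_2[3] = -k, and α_1[3] = ω_2[3]. Then α_1 = ω_2 and ω_1 = α_2, and consequently y = 0, a contradiction. Hence no such configuration exists. -/
import Mathlib


/-- Let `A` be a three-dimensional permutation array of size
`2 × k × 2k` with `k` odd, defined by a bijection `φ : [2] × [k] → [2k]`.  Suppose `A`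
has dots `α₁ = (p₁, φ p₁)`, `ω₁ = (q₁, φ q₁)`, `α₂ = (p₂, φ p₂)`, `ω₂ = (q₂, φ q₂)` with
`ω₁ - α₁` and `ω₂ - α₂` both equal as toroidal vectors to `(0, y, k)` for some
`y ∈ ℤ_k \ {0}`, whose third coordinates satisfy `ω₁[3] - α₁[3] = k`,
`ω₂[3] - α₂[3] = -k` and `α₁[3] = ω₂[3]`.  Then no such configuration exists. -/
theorem no_half_configuration (k : ℕ) (hk : Odd k) (hk2 : 2 ≤ k)
    (φ : Fin 2 × Fin k ≃ Fin (2 * k))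
    (y : ZMod k) (hy : y ≠ 0)
    (p₁ q₁ p₂ q₂ : Fin 2 × Fin k)
    (h₁ : p₁ ≠ q₁) (h₂ : p₂ ≠ q₂)
    (t₁₁ : (((q₁.1 : ℤ) - (p₁.1 : ℤ)) : ZMod 2) = 0)
    (t₁₂ : (((q₁.2 : ℤ) - (p₁.2 : ℤ)) : ZMod k) = y)
    (t₁₃ : (((φ q₁ : ℤ) - (φ p₁ : ℤ)) : ZMod (2 * k)) = ((k : ℤ) : ZMod (2 * k)))
    (t₂₁ : (((q₂.1 : ℤ) - (p₂.1 : ℤ)) : ZMod 2) = 0)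
    (t₂₂ : (((q₂.2 : ℤ) - (p₂.2 : ℤ)) : ZMod k) = y)
    (t₂₃ : (((φ q₂ : ℤ) - (φ p₂ : ℤ)) : ZMod (2 * k)) = ((k : ℤ) : ZMod (2 * k)))
    (d₁ : (φ q₁ : ℤ) - (φ p₁ : ℤ) = (k : ℤ))
    (d₂ : (φ q₂ : ℤ) - (φ p₂ : ℤ) = -(k : ℤ))
    (d₃ : (φ p₁ : ℤ) = (φ q₂ : ℤ)) :
    False := by
  have hq2 : q₂ = p₁ := by
    apply φ.injective
    have : ((φ q₂ : ℕ) : ℤ) = ((φ p₁ : ℕ) : ℤ) := d₃.symm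
    exact Fin.ext (Int.ofNat.inj this)
  have hp2 : p₂ = q₁ := by
    apply φ.injective
    have : ((φ p₂ : ℕ) : ℤ) = ((φ q₁ : ℕ) : ℤ) := by omega
    exact Fin.ext (Int.ofNat.inj this)
  have e : (q₂.2 : ℤ) = (p₁.2 : ℤ) := by rw [hq2]
  have e' : (p₂.2 : ℤ) = (q₁.2 : ℤ) := by rw [hp2]
  have h2y : (2 : ZMod k) * y = 0 := by
    have h1 := t₁₂
    have h2 := t₂₂
    rw [e, e'] at h2
    have hyy : y + y = 0 := by push_cast at h1 h2; linear_combination -h1 - h2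
    ring_nf
    linear_combination hyy
  have h2 : IsUnit (2 : ZMod k) := by
    haveI : NeZero k := ⟨by omega⟩
    apply ZMod.isUnit_iff_coprime 2 k |>.mpr
    rcases hk with ⟨m, rfl⟩
    simpa [Nat.coprime_comm] using Nat.coprime_two_right_iff_odd.mpr ⟨m, rfl⟩
  exact hy (by simpa using (h2.mul_right_eq_zero.mp h2y))
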